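/- Fix 1 < q < 2 and let k(x*) = |x*|^q / q on ℝ. There is no twice continuously differentiable convex function h : ℝ → ℝ such that every function f_b(x) = |x − b|^p / p, b ∈ ℝ (with 1/p + 1/q = 1, so p > 2), is both L-smooth and μ-strongly convex relative to h for some constants L ≥ μ > 0. In particular, each f_b satisfies [k''(f_b'(x))]⁻¹ = f_b''(x) for all x ≠ b, but no single C² reference function h works for all translates f_b in the primal relative sense. -/

import Mathlib

open Filter Topology

noncomputable section

lemma stmt10_hasDerivAt_rpow_sub {r c x : ℝ} (hx : c < x) :
    HasDerivAt (fun w : ℝ => (w - c) ^ r) (r * (x - c) ^ (r - 1)) x := by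
  have h1 : HasDerivAt (fun w : ℝ => w - c) 1 x := (hasDerivAt_id x).sub_const c
  have h2 := Real.hasDerivAt_rpow_const (x := x - c) (p := r)
    (Or.inl (ne_of_gt (sub_pos.2 hx)))
  simpa [Function.comp_def] using h2.comp x h1

lemma stmt10_deriv1_pos {r c x : ℝ} (hr : 0 < r) (hx : c < x) :
    deriv (fun w : ℝ => |w - c| ^ r / r) x = (x - c) ^ (r - 1) := by
  have hev : (fun w : ℝ => |w - c| ^ r / r) =ᶠ[𝓝 x] fun w => (w - c) ^ r / r := by
    filter_upwards [Ioi_mem_nhds hx] with w hw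
    rw [abs_of_pos (sub_pos.2 hw)]
  rw [hev.deriv_eq]
  rw [((stmt10_hasDerivAt_rpow_sub hx).div_const r).deriv]
  field_simp

lemma stmt10_deriv1_neg {r c x : ℝ} (hr : 0 < r) (hx : x < c) :
    deriv (fun w : ℝ => |w - c| ^ r / r) x = -(c - x) ^ (r - 1) := by
  have hev : (fun w : ℝ => |w - c| ^ r / r) =ᶠ[𝓝 x] fun w => (c - w) ^ r / r := by
    filter_upwards [Iio_mem_nhds hx] with w hw
    rw [abs_of_neg (by linarith [Set.mem_Iio.mp hw] : w - c < 0), neg_sub]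
  rw [hev.deriv_eq]
  have h1 : HasDerivAt (fun w : ℝ => c - w) (-1) x := (hasDerivAt_id x).const_sub c
  have h2 := (Real.hasDerivAt_rpow_const (x := c - x) (p := r)
    (Or.inl (ne_of_gt (sub_pos.2 hx)))).comp x h1
  have h2' : HasDerivAt (fun w : ℝ => (c - w) ^ r) (r * (c - x) ^ (r - 1) * -1) x := h2
  rw [(h2'.div_const r).deriv]
  field_simp

lemma stmt10_deriv2_pos {r c x : ℝ} (hr : 0 < r) (hx : c < x) :
    deriv (deriv (fun w : ℝ => |w - c| ^ r / r)) x = (r - 1) * (x - c) ^ (r - 2) := by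
  have hev : deriv (fun w : ℝ => |w - c| ^ r / r) =ᶠ[𝓝 x] fun w => (w - c) ^ (r - 1) := by
    filter_upwards [Ioi_mem_nhds hx] with w hw
    exact stmt10_deriv1_pos hr hw
  rw [hev.deriv_eq, (stmt10_hasDerivAt_rpow_sub (r := r - 1) hx).deriv]
  rw [show r - 1 - 1 = r - 2 by ring]

lemma stmt10_deriv2_neg {r c x : ℝ} (hr : 0 < r) (hx : x < c) :
    deriv (deriv (fun w : ℝ => |w - c| ^ r / r)) x = (r - 1) * (c - x) ^ (r - 2) := by
  have hev : deriv (fun w : ℝ => |w - c| ^ r / r) =ᶠ[𝓝 x] fun w => -(c - w) ^ (r - 1) := by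
    filter_upwards [Iio_mem_nhds hx] with w hw
    exact stmt10_deriv1_neg hr hw
  rw [hev.deriv_eq]
  have h1 : HasDerivAt (fun w : ℝ => c - w) (-1) x := (hasDerivAt_id x).const_sub c
  have h2 := ((Real.hasDerivAt_rpow_const (x := c - x) (p := r - 1)
    (Or.inl (ne_of_gt (sub_pos.2 hx)))).comp x h1).neg
  have h2' : HasDerivAt (fun w : ℝ => -(c - w) ^ (r - 1))
      (-((r - 1) * (c - x) ^ (r - 1 - 1) * -1)) x := h2
  rw [h2'.deriv, show r - 1 - 1 = r - 2 by ring]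
  ring

lemma stmt10_hasDerivAt_abs_rpow {r : ℝ} (hr : 2 ≤ r) (c x : ℝ) :
    HasDerivAt (fun w : ℝ => |w - c| ^ r / r) ((x - c) * ((x - c) ^ 2) ^ ((r - 2) / 2)) x := by
  have h1 : HasDerivAt (fun w : ℝ => (w - c) ^ 2) (2 * (x - c)) x := by
    simpa [mul_comm, Pi.pow_def] using ((hasDerivAt_id x).sub_const c).pow 2
  have h2 := (Real.hasDerivAt_rpow_const (x := (x - c) ^ 2) (p := r / 2)
    (Or.inr (by linarith))).comp x h1
  have h3 := h2.div_const r
  have hfun : (fun w : ℝ => ((w - c) ^ 2) ^ (r / 2) / r) = fun w : ℝ => |w - c| ^ r / r := by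
    funext w
    rw [← sq_abs, ← Real.rpow_natCast |w - c| 2, ← Real.rpow_mul (abs_nonneg _)]
    norm_num
    rw [show 2 * (r / 2) = r by ring]
  have h3' : HasDerivAt (fun w : ℝ => |w - c| ^ r / r)
      (r / 2 * ((x - c) ^ 2) ^ (r / 2 - 1) * (2 * (x - c)) / r) x := hfun ▸ h3
  convert h3' using 1
  rw [show (r - 2) / 2 = r / 2 - 1 by ring]
  have hr0 : r ≠ 0 := by linarith
  field_simp


/-- for `1 < q < 2`, `k(x*) = |x*|^q/q` and `f_b(x) = |x - b|^p/p` with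
`1/p + 1/q = 1` (so `p > 2`), each `f_b` satisfies `k''(f_b'(x)) · f_b''(x) = 1` (i.e.
`[k''(f_b'(x))]⁻¹ = f_b''(x)`) for all `x ≠ b`, yet there is no single twice continuously
differentiable convex reference function `h : ℝ → ℝ` such that every translate `f_b` is both
`L`-smooth and `μ`-strongly convex relative to `h` for some constants `L ≥ μ > 0`. -/
theorem stmt10 (p q : ℝ) (hq1 : 1 < q) (hq2 : q < 2) (hpq : 1 / p + 1 / q = 1) :
    (∀ b x : ℝ, x ≠ b →
      deriv (deriv (fun y : ℝ => |y| ^ q / q)) (deriv (fun w : ℝ => |w - b| ^ p / p) x) *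
        deriv (deriv (fun w : ℝ => |w - b| ^ p / p)) x = 1) ∧
    ¬ ∃ h : ℝ → ℝ, ContDiff ℝ 2 h ∧ ConvexOn ℝ Set.univ h ∧
        ∀ b : ℝ, ∃ L μ : ℝ, 0 < μ ∧ μ ≤ L ∧
          ConvexOn ℝ Set.univ (fun x => L * h x - |x - b| ^ p / p) ∧
          ConvexOn ℝ Set.univ (fun x => |x - b| ^ p / p - μ * h x) := by
  -- basic facts about p
  have hq0 : (0:ℝ) < q := by linarith
  have hp0 : p ≠ 0 := by
    intro hcontra
    rw [hcontra, div_zero] at hpq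
    have hq1' : q = 1 := by
      field_simp at hpq
      linarith
    linarith
  have hq0' : q ≠ 0 := by linarith
  have hkey : p * (q - 1) = q := by
    field_simp at hpq
    nlinarith [hpq]
  have hp2 : 2 < p := by nlinarith
  have hp1 : (0:ℝ) < p := by linarith
  have hpq1 : (p - 1) * (q - 1) = 1 := by nlinarith
  have hQ : (fun y : ℝ => |y| ^ q / q) = fun y : ℝ => |y - 0| ^ q / q := by
    funext y; rw [sub_zero]
  constructor
  · -- Part 1
    intro b x hx
    rcases lt_or_gt_of_ne hx with hxb | hxb
    · -- x < b
      have hs : (0:ℝ) < b - x := sub_pos.2 hxb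
      have hd1 : deriv (fun w : ℝ => |w - b| ^ p / p) x = -(b - x) ^ (p - 1) :=
        stmt10_deriv1_neg hp1 hxb
      have hd2 : deriv (deriv (fun w : ℝ => |w - b| ^ p / p)) x
          = (p - 1) * (b - x) ^ (p - 2) := stmt10_deriv2_neg hp1 hxb
      have ht : -(b - x) ^ (p - 1) < (0:ℝ) := by
        have := Real.rpow_pos_of_pos hs (p - 1); linarith
      have hk := stmt10_deriv2_neg (c := 0) (x := -(b - x) ^ (p - 1)) hq0 ht
      rw [← hQ] at hk
      rw [hd1, hd2, hk]
      rw [show (0:ℝ) - -(b - x) ^ (p - 1) = (b - x) ^ (p - 1) by ring]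
      rw [← Real.rpow_mul hs.le (p - 1) (q - 2)]
      have e1 : (b - x) ^ ((p - 1) * (q - 2)) * (b - x) ^ (p - 2) = 1 := by
        rw [← Real.rpow_add hs, show (p - 1) * (q - 2) + (p - 2) = 0 by nlinarith,
          Real.rpow_zero]
      calc (q - 1) * (b - x) ^ ((p - 1) * (q - 2)) * ((p - 1) * (b - x) ^ (p - 2))
          = ((p - 1) * (q - 1)) * ((b - x) ^ ((p - 1) * (q - 2)) * (b - x) ^ (p - 2)) := by
            ring
        _ = 1 := by rw [hpq1, e1, one_mul]
    · -- b < x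
      have hs : (0:ℝ) < x - b := sub_pos.2 hxb
      have hd1 : deriv (fun w : ℝ => |w - b| ^ p / p) x = (x - b) ^ (p - 1) :=
        stmt10_deriv1_pos hp1 hxb
      have hd2 : deriv (deriv (fun w : ℝ => |w - b| ^ p / p)) x
          = (p - 1) * (x - b) ^ (p - 2) := stmt10_deriv2_pos hp1 hxb
      have ht : (0:ℝ) < (x - b) ^ (p - 1) := Real.rpow_pos_of_pos hs (p - 1)
      have hk := stmt10_deriv2_pos (c := 0) (x := (x - b) ^ (p - 1)) hq0 ht
      rw [← hQ] at hk
      rw [hd1, hd2, hk, sub_zero]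
      rw [← Real.rpow_mul hs.le (p - 1) (q - 2)]
      have e1 : (x - b) ^ ((p - 1) * (q - 2)) * (x - b) ^ (p - 2) = 1 := by
        rw [← Real.rpow_add hs, show (p - 1) * (q - 2) + (p - 2) = 0 by nlinarith,
          Real.rpow_zero]
      calc (q - 1) * (x - b) ^ ((p - 1) * (q - 2)) * ((p - 1) * (x - b) ^ (p - 2))
          = ((p - 1) * (q - 1)) * ((x - b) ^ ((p - 1) * (q - 2)) * (x - b) ^ (p - 2)) := by
            ring
        _ = 1 := by rw [hpq1, e1, one_mul]
  · -- Part 2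
    rintro ⟨h, hC2, -, hb⟩
    have hdh : Differentiable ℝ h := hC2.differentiable (by norm_num)
    have hdh' : Differentiable ℝ (deriv h) := by
      have h2 : ContDiff ℝ ((1 : WithTop ℕ∞) + 1) h := by
        convert hC2 using 2
        exact one_add_one_eq_two
      exact (contDiff_succ_iff_deriv.mp h2).2.2.differentiable one_ne_zero
    have hder : ∀ b x : ℝ, HasDerivAt (fun w : ℝ => |w - b| ^ p / p)
        ((x - b) * ((x - b) ^ 2) ^ ((p - 2) / 2)) x := fun b x =>
      stmt10_hasDerivAt_abs_rpow hp2.le b x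
    have hdfb : ∀ b x : ℝ, DifferentiableAt ℝ (fun w : ℝ => |w - b| ^ p / p) x :=
      fun b x => (hder b x).differentiableAt
    have hdb0 : ∀ b : ℝ, deriv (fun w : ℝ => |w - b| ^ p / p) b = 0 := by
      intro b; rw [(hder b b).deriv]; simp
    -- second derivative of h vanishes everywhere
    have key : ∀ b : ℝ, deriv (deriv h) b = 0 := by
      intro b
      obtain ⟨L, μ, hμ, hμL, hc1, hc2⟩ := hb b
      have hL : 0 < L := lt_of_lt_of_le hμ hμL
      have hmono1 : MonotoneOn (deriv (fun x => L * h x - |x - b| ^ p / p)) Set.univ :=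
        hc1.monotoneOn_deriv (fun x _ => ((hdh x).const_mul L).sub (hdfb b x))
      have hmono2 : MonotoneOn (deriv (fun x => |x - b| ^ p / p - μ * h x)) Set.univ :=
        hc2.monotoneOn_deriv (fun x _ => (hdfb b x).sub ((hdh x).const_mul μ))
      have hd1 : ∀ y, deriv (fun x => L * h x - |x - b| ^ p / p) y
          = L * deriv h y - deriv (fun w : ℝ => |w - b| ^ p / p) y := fun y => by
        rw [deriv_fun_sub ((hdh y).const_mul L) (hdfb b y),
          deriv_const_mul L (hdh y)]
      have hd2 : ∀ y, deriv (fun x => |x - b| ^ p / p - μ * h x) y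
          = deriv (fun w : ℝ => |w - b| ^ p / p) y - μ * deriv h y := fun y => by
        rw [deriv_fun_sub (hdfb b y) ((hdh y).const_mul μ),
          deriv_const_mul μ (hdh y)]
      have hbound : ∀ y, b < y →
          (y - b) ^ (p - 2) / L ≤ slope (deriv h) b y ∧
          slope (deriv h) b y ≤ (y - b) ^ (p - 2) / μ := by
        intro y hy
        have ht : (0:ℝ) < y - b := sub_pos.2 hy
        have hfy : deriv (fun w : ℝ => |w - b| ^ p / p) y = (y - b) ^ (p - 1) :=
          stmt10_deriv1_pos hp1 hy
        have m1 := hmono1 (Set.mem_univ b) (Set.mem_univ y) hy.le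
        have m2 := hmono2 (Set.mem_univ b) (Set.mem_univ y) hy.le
        rw [hd1 b, hd1 y, hfy, hdb0 b] at m1
        rw [hd2 b, hd2 y, hfy, hdb0 b] at m2
        have hAB : (y - b) ^ (p - 1) = (y - b) ^ (p - 2) * (y - b) := by
          rw [show p - 1 = (p - 2) + 1 by ring, Real.rpow_add ht, Real.rpow_one]
        have hslope : slope (deriv h) b y = (deriv h y - deriv h b) / (y - b) := by
          rw [slope_def_field]
        have hBpos : (0:ℝ) ≤ (y - b) ^ (p - 2) := (Real.rpow_pos_of_pos ht _).le
        constructor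
        · rw [hslope, le_div_iff₀ ht, div_mul_eq_mul_div, div_le_iff₀ hL]
          nlinarith [m1]
        · rw [hslope, div_le_div_iff₀ ht hμ]
          nlinarith [m2]
      -- squeeze
      have hlim : Tendsto (fun y : ℝ => (y - b) ^ (p - 2)) (𝓝[>] b) (𝓝 0) := by
        have hc : ContinuousAt (fun s : ℝ => s ^ (p - 2)) 0 :=
          Real.continuousAt_rpow_const 0 (p - 2) (Or.inr (by linarith))
        have hb0 : Tendsto (fun y : ℝ => y - b) (𝓝[>] b) (𝓝 0) := by
          have : Tendsto (fun y : ℝ => y - b) (𝓝 b) (𝓝 (b - b)) :=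
            (continuous_id.sub continuous_const).tendsto b
          simpa using this.mono_left nhdsWithin_le_nhds
        have := hc.tendsto.comp hb0
        simpa [Function.comp_def, Real.zero_rpow (show p - 2 ≠ 0 by linarith)] using this
      have hlimL : Tendsto (fun y : ℝ => (y - b) ^ (p - 2) / L) (𝓝[>] b) (𝓝 0) := by
        simpa using hlim.div_const L
      have hlimμ : Tendsto (fun y : ℝ => (y - b) ^ (p - 2) / μ) (𝓝[>] b) (𝓝 0) := by
        simpa using hlim.div_const μ
      have hsq : Tendsto (slope (deriv h) b) (𝓝[>] b) (𝓝 0) := by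
        refine tendsto_of_tendsto_of_tendsto_of_le_of_le' hlimL hlimμ ?_ ?_
        · filter_upwards [self_mem_nhdsWithin] with y hy
          exact (hbound y hy).1
        · filter_upwards [self_mem_nhdsWithin] with y hy
          exact (hbound y hy).2
      have hderiv2 : HasDerivAt (deriv h) (deriv (deriv h) b) b :=
        (hdh' b).hasDerivAt
      have hslope' : Tendsto (slope (deriv h) b) (𝓝[>] b) (𝓝 (deriv (deriv h) b)) :=
        (hasDerivAt_iff_tendsto_slope.mp hderiv2).mono_left
          (nhdsWithin_mono b (fun y hy => Set.mem_compl_singleton_iff.mpr (ne_of_gt hy)))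
      exact tendsto_nhds_unique hslope' hsq
    -- deriv h is constant
    have hconst : ∀ x y : ℝ, deriv h x = deriv h y := fun x y =>
      is_const_of_deriv_eq_zero hdh' key x y
    -- contradiction using b = 0
    obtain ⟨L, μ, hμ, hμL, hc1, hc2⟩ := hb 0
    have hL : 0 < L := lt_of_lt_of_le hμ hμL
    have hmono1 : MonotoneOn (deriv (fun x => L * h x - |x - (0:ℝ)| ^ p / p)) Set.univ :=
      hc1.monotoneOn_deriv (fun x _ => ((hdh x).const_mul L).sub (hdfb 0 x))
    have m1 := hmono1 (Set.mem_univ (0:ℝ)) (Set.mem_univ (1:ℝ)) zero_le_one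
    have hd1 : ∀ y, deriv (fun x => L * h x - |x - (0:ℝ)| ^ p / p) y
        = L * deriv h y - deriv (fun w : ℝ => |w - (0:ℝ)| ^ p / p) y := fun y => by
      rw [deriv_fun_sub ((hdh y).const_mul L) (hdfb 0 y),
        deriv_const_mul L (hdh y)]
    have hf1 : deriv (fun w : ℝ => |w - (0:ℝ)| ^ p / p) 1 = 1 := by
      rw [stmt10_deriv1_pos hp1 (by norm_num : (0:ℝ) < 1)]
      simp [Real.one_rpow]
    rw [hd1 0, hd1 1, hf1, hdb0 0, hconst 0 1] at m1
    linarith
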